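/- arXiv:cs/0508049 — 2 statements merged into one kernel-verified Lean document; each statement's English description precedes it below -/
import Mathlib

section
/- Let p = (p₁,…,p_n) be a vector of nonnegative integers such that p lies in the fundamental cone K(H) and Hpᵀ = 0 over F₂ (that is, Σ_i h_{ji} p_i is even for every row index j). Then p is an unscaled pseudo-codeword of H; that is, there exist an integer M ≥ 1, permutations σ_{ji} of {1,…,M} for each pair (j,i) with h_{ji} = 1, and a vector c̃ ∈ F₂^{nM} with H̃c̃ᵀ = 0 over F₂ for the associated M-lift H̃, such that p_i = #{k : c̃_{(i,k)} = 1} for each i. -/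
open Finset

/-- The fundamental cone of a 0-1 matrix `H` (entries in `ZMod 2`, read as reals via `.val`). -/
def InFundCone {R I : Type*} [Fintype I] [DecidableEq I] (H : Matrix R I (ZMod 2)) (ν : I → ℝ) : Prop :=
  (∀ i, 0 ≤ ν i) ∧
  ∀ (j : R) (i : I), ((H j i).val : ℝ) * ν i ≤ ∑ i' ∈ Finset.univ.erase i, ((H j i').val : ℝ) * ν i'

/-- The `M`-lift of `H` determined by permutations `σ j i`. -/
def matLift {R I : Type*} (H : Matrix R I (ZMod 2)) {M : ℕ} (σ : R → I → Equiv.Perm (Fin M)) :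
    Matrix (R × Fin M) (I × Fin M) (ZMod 2) :=
  fun jl ik => if H jl.1 ik.1 = 1 ∧ σ jl.1 ik.1 jl.2 = ik.2 then 1 else 0

/-- `p` is an unscaled pseudo-codeword of `H`. -/
def IsUnscaledPseudoCodeword {R I : Type*} [Fintype R] [Fintype I]
    (H : Matrix R I (ZMod 2)) (p : I → ℕ) : Prop :=
  ∃ M : ℕ, 0 < M ∧ ∃ (σ : R → I → Equiv.Perm (Fin M)) (c : I × Fin M → ZMod 2),
    (matLift H σ).mulVec c = 0 ∧
    ∀ i, p i = (Finset.univ.filter (fun k : Fin M => c (i, k) = 1)).card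

/-- The Tanner graph of `H`: bit nodes = columns, check nodes = rows. -/
def TannerGraph {R I : Type*} (H : Matrix R I (ZMod 2)) : SimpleGraph (I ⊕ R) where
  Adj v w := match v, w with
    | Sum.inl i, Sum.inr j => H j i = 1
    | Sum.inr j, Sum.inl i => H j i = 1
    | _, _ => False
  symm := by constructor; rintro (i | j) (i' | j') h <;> simp_all
  loopless := by constructor; rintro (i | j) h <;> simp_all

/-- `π : W → V` realizes `G'` as an `M`-cover of `G`. -/
def IsMCover {V W : Type*} (G : SimpleGraph V) (G' : SimpleGraph W) (π : W → V) (M : ℕ) : Prop :=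
  Function.Surjective π ∧
  (∀ a b, G'.Adj a b → G.Adj (π a) (π b)) ∧
  (∀ v : V, Nat.card (π ⁻¹' {v}) = M) ∧
  (∀ w : W, Set.BijOn π (G'.neighborSet w) (G.neighborSet (π w)))


section Blocks
variable {ι : Type*} [LinearOrder ι] (f : ι → ℕ)

lemma partialSum_add_le {E : Finset ι} {i i' : ι} (hi : i ∈ E) (hii' : i < i') :
    (∑ x ∈ E.filter (· < i), f x) + f i ≤ ∑ x ∈ E.filter (· < i'), f x := by
  classical
  have hsub : insert i (E.filter (· < i)) ⊆ E.filter (· < i') := by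
    intro x hx
    rcases Finset.mem_insert.mp hx with rfl | hx
    · exact Finset.mem_filter.mpr ⟨hi, hii'⟩
    · rcases Finset.mem_filter.mp hx with ⟨h1, h2⟩
      exact Finset.mem_filter.mpr ⟨h1, h2.trans hii'⟩
  calc (∑ x ∈ E.filter (· < i), f x) + f i
      = ∑ x ∈ insert i (E.filter (· < i)), f x := by
        rw [Finset.sum_insert (by simp), add_comm]
    _ ≤ ∑ x ∈ E.filter (· < i'), f x := Finset.sum_le_sum_of_subset hsub

lemma partialSum_add_le_total {E : Finset ι} {i : ι} (hi : i ∈ E) :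
    (∑ x ∈ E.filter (· < i), f x) + f i ≤ ∑ x ∈ E, f x := by
  classical
  have hsub : insert i (E.filter (· < i)) ⊆ E := by
    intro x hx
    rcases Finset.mem_insert.mp hx with rfl | hx
    · exact hi
    · exact (Finset.mem_filter.mp hx).1
  calc (∑ x ∈ E.filter (· < i), f x) + f i
      = ∑ x ∈ insert i (E.filter (· < i)), f x := by
        rw [Finset.sum_insert (by simp), add_comm]
    _ ≤ ∑ x ∈ E, f x := Finset.sum_le_sum_of_subset hsub

lemma exists_block (E : Finset ι) :
    ∀ u, u < ∑ i ∈ E, f i → ∃ i ∈ E,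
      (∑ x ∈ E.filter (· < i), f x) ≤ u ∧ u < (∑ x ∈ E.filter (· < i), f x) + f i := by
  classical
  induction E using Finset.induction_on_max with
  | empty => simp
  | insert a s ha ih =>
    have has : a ∉ s := fun h => lt_irrefl a (ha a h)
    intro u hu
    rw [Finset.sum_insert has] at hu
    have hfs : (insert a s).filter (· < a) = s := by
      rw [Finset.filter_insert]
      simp only [lt_irrefl, if_false]
      exact Finset.filter_true_of_mem (fun x hx => ha x hx)
    by_cases hcase : u < ∑ i ∈ s, f i
    · obtain ⟨i, hi, h1, h2⟩ := ih u hcase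
      have hfi : (insert a s).filter (· < i) = s.filter (· < i) := by
        rw [Finset.filter_insert, if_neg (not_lt.mpr (ha i hi).le)]
      exact ⟨i, Finset.mem_insert_of_mem hi, by rw [hfi]; exact h1, by rw [hfi]; exact h2⟩
    · refine ⟨a, Finset.mem_insert_self a s, ?_, ?_⟩
      · rw [hfs]; omega
      · rw [hfs]; omega

lemma block_unique {E : Finset ι} {i i' : ι} (hi : i ∈ E) (hi' : i' ∈ E) {u : ℕ}
    (h1 : (∑ x ∈ E.filter (· < i), f x) ≤ u) (h2 : u < (∑ x ∈ E.filter (· < i), f x) + f i)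
    (h1' : (∑ x ∈ E.filter (· < i'), f x) ≤ u)
    (h2' : u < (∑ x ∈ E.filter (· < i'), f x) + f i') : i = i' := by
  rcases lt_trichotomy i i' with h | h | h
  · exact absurd ((partialSum_add_le f hi h).trans h1') (by omega)
  · exact h
  · exact absurd ((partialSum_add_le f hi' h).trans h1) (by omega)

end Blocks

lemma eq_of_mod_eq {m u v : ℕ} (h : u % m = v % m) (h1 : u < v + m) (h2 : v < u + m) : u = v := by
  rcases le_total u v with hle | hle
  · have hd := (Nat.modEq_iff_dvd' hle).mp h
    have := Nat.eq_zero_of_dvd_of_lt hd (by omega)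
    omega
  · have hd := (Nat.modEq_iff_dvd' hle).mp h.symm
    have := Nat.eq_zero_of_dvd_of_lt hd (by omega)
    omega

/-- The `t`-th element of the cyclic block starting at `s` of length `m`, viewed in `Fin M`. -/
def gfun (M : ℕ) (hM : 0 < M) (m s : ℕ) (t : ℕ) : Fin M :=
  ⟨(s + t) % m % M, Nat.mod_lt _ hM⟩

/-- The cyclic block of length `fi` starting at `s`, reduced mod `m`, inside `Fin M`. -/
def Tset (M : ℕ) (hM : 0 < M) (m s fi : ℕ) : Finset (Fin M) :=
  (Finset.range fi).image (gfun M hM m s)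

lemma mem_Tset {M : ℕ} {hM : 0 < M} {m s fi : ℕ} (l : Fin M) :
    l ∈ Tset M hM m s fi ↔ ∃ t, t < fi ∧ (s + t) % m % M = (l : ℕ) := by
  simp only [Tset, Finset.mem_image, Finset.mem_range, gfun, Fin.ext_iff]

lemma Tset_card (M : ℕ) (hM : 0 < M) (m s fi : ℕ) (hmM : m ≤ M) (hfi : fi ≤ m) :
    (Tset M hM m s fi).card = fi := by
  rw [Tset, Finset.card_image_of_injOn, Finset.card_range]
  intro t1 h1 t2 h2 heq
  rw [Finset.mem_coe, Finset.mem_range] at h1 h2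
  have hm : 0 < m := lt_of_lt_of_le (Nat.pos_of_ne_zero (by omega) : 0 < fi) hfi
  have hmod1 : (s + t1) % m < m := Nat.mod_lt _ hm
  have hmod2 : (s + t2) % m < m := Nat.mod_lt _ hm
  have hval := congrArg Fin.val heq
  simp only [gfun] at hval
  rw [Nat.mod_eq_of_lt (lt_of_lt_of_le hmod1 hmM),
    Nat.mod_eq_of_lt (lt_of_lt_of_le hmod2 hmM)] at hval
  have ht := Nat.ModEq.add_left_cancel' s hval
  rw [Nat.ModEq, Nat.mod_eq_of_lt (lt_of_lt_of_le h1 hfi), Nat.mod_eq_of_lt (lt_of_lt_of_le h2 hfi)] at ht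
  exact ht

lemma Tcount {ι : Type*} [LinearOrder ι] (f : ι → ℕ) (E : Finset ι) (M m : ℕ) (hM : 0 < M)
    (hmM : m ≤ M) (hsum : ∑ i ∈ E, f i = 2 * m) (hfm : ∀ i ∈ E, f i ≤ m) (l : Fin M) :
    (∑ i ∈ E, if l ∈ Tset M hM m (∑ x ∈ E.filter (· < i), f x) (f i) then 1 else 0)
      = if (l : ℕ) < m then 2 else 0 := by
  classical
  rcases Nat.eq_zero_or_pos m with hm | hm
  · subst hm
    rw [if_neg (by omega)]
    apply Finset.sum_eq_zero
    intro i hi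
    have hf0 : f i = 0 := by have := hfm i hi; omega
    rw [if_neg]
    rw [mem_Tset]
    rintro ⟨t, ht, -⟩
    omega
  · set F := (Finset.range (2*m)).filter (fun u => u % m = (l:ℕ)) with hF
    have hmemF : ∀ u, u ∈ F ↔ u < 2*m ∧ u % m = (l:ℕ) := by
      intro u; simp [hF]
    have hFcard : F.card = if (l:ℕ) < m then 2 else 0 := by
      by_cases hl : (l:ℕ) < m
      · rw [if_pos hl]
        have hFeq : F = {(l:ℕ), (l:ℕ) + m} := by
          ext u
          rw [hmemF]
          simp only [Finset.mem_insert, Finset.mem_singleton]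
          constructor
          · rintro ⟨h1, h2⟩
            by_cases hum : u < m
            · left; rw [Nat.mod_eq_of_lt hum] at h2; omega
            · right
              rw [Nat.mod_eq_sub_mod (le_of_not_gt hum), Nat.mod_eq_of_lt (by omega)] at h2
              omega
          · rintro (rfl | rfl)
            · exact ⟨by omega, Nat.mod_eq_of_lt hl⟩
            · exact ⟨by omega, by rw [Nat.add_mod_right]; exact Nat.mod_eq_of_lt hl⟩
        rw [hFeq, Finset.card_insert_of_notMem (by simp; omega), Finset.card_singleton]
      · rw [if_neg hl]
        rw [Finset.card_eq_zero, Finset.eq_empty_iff_forall_notMem]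
        intro u hu
        rw [hmemF] at hu
        exact hl (hu.2 ▸ Nat.mod_lt u hm)
    have hbiU : F = E.biUnion (fun i => F.filter (fun u =>
        (∑ x ∈ E.filter (· < i), f x) ≤ u ∧ u < (∑ x ∈ E.filter (· < i), f x) + f i)) := by
      ext u
      simp only [Finset.mem_biUnion, Finset.mem_filter]
      constructor
      · intro hu
        have hu2m : u < ∑ i ∈ E, f i := by
          rw [hsum]; exact ((hmemF u).mp hu).1
        obtain ⟨i, hi, h1, h2⟩ := exists_block f E u hu2m
        exact ⟨i, hi, hu, h1, h2⟩
      · rintro ⟨i, hi, hu, -, -⟩; exact hu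
    have hdisj : ∀ i₁ ∈ E, ∀ i₂ ∈ E, i₁ ≠ i₂ → Disjoint
        (F.filter (fun u => (∑ x ∈ E.filter (· < i₁), f x) ≤ u ∧ u < (∑ x ∈ E.filter (· < i₁), f x) + f i₁))
        (F.filter (fun u => (∑ x ∈ E.filter (· < i₂), f x) ≤ u ∧ u < (∑ x ∈ E.filter (· < i₂), f x) + f i₂)) := by
      intro i₁ hi₁ i₂ hi₂ hne
      rw [Finset.disjoint_left]
      intro u hu1 hu2
      obtain ⟨-, h1, h2⟩ := Finset.mem_filter.mp hu1
      obtain ⟨-, h1', h2'⟩ := Finset.mem_filter.mp hu2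
      exact hne (block_unique f hi₁ hi₂ h1 h2 h1' h2')
    have hcards : F.card = ∑ i ∈ E, (F.filter (fun u =>
        (∑ x ∈ E.filter (· < i), f x) ≤ u ∧ u < (∑ x ∈ E.filter (· < i), f x) + f i)).card := by
      conv_lhs => rw [hbiU]
      exact Finset.card_biUnion hdisj
    have hper : ∀ i ∈ E, (F.filter (fun u =>
        (∑ x ∈ E.filter (· < i), f x) ≤ u ∧ u < (∑ x ∈ E.filter (· < i), f x) + f i)).card
        = if l ∈ Tset M hM m (∑ x ∈ E.filter (· < i), f x) (f i) then 1 else 0 := by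
      intro i hi
      have hfi := hfm i hi
      have hsifi : (∑ x ∈ E.filter (· < i), f x) + f i ≤ 2*m := by
        rw [← hsum]; exact partialSum_add_le_total f hi
      by_cases hl : l ∈ Tset M hM m (∑ x ∈ E.filter (· < i), f x) (f i)
      · rw [if_pos hl]
        obtain ⟨t, ht, hgt⟩ := (mem_Tset l).mp hl
        have hmod : ((∑ x ∈ E.filter (· < i), f x) + t) % m = (l:ℕ) := by
          rw [← hgt, Nat.mod_eq_of_lt (lt_of_lt_of_le (Nat.mod_lt _ hm) hmM)]
        have hsingle : F.filter (fun u =>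
            (∑ x ∈ E.filter (· < i), f x) ≤ u ∧ u < (∑ x ∈ E.filter (· < i), f x) + f i)
            = {(∑ x ∈ E.filter (· < i), f x) + t} := by
          ext u
          rw [Finset.mem_filter, Finset.mem_singleton, hmemF]
          constructor
          · rintro ⟨⟨hu2m, humod⟩, hub1, hub2⟩
            exact eq_of_mod_eq (humod.trans hmod.symm) (by omega) (by omega)
          · rintro rfl
            exact ⟨⟨by omega, hmod⟩, by omega, by omega⟩
        rw [hsingle, Finset.card_singleton]
      · rw [if_neg hl]
        rw [Finset.card_eq_zero, Finset.eq_empty_iff_forall_notMem]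
        intro u hu
        rw [Finset.mem_filter, hmemF] at hu
        obtain ⟨⟨hu2m, humod⟩, hub1, hub2⟩ := hu
        apply hl
        rw [mem_Tset]
        refine ⟨u - (∑ x ∈ E.filter (· < i), f x), by omega, ?_⟩
        have huu : (∑ x ∈ E.filter (· < i), f x) + (u - (∑ x ∈ E.filter (· < i), f x)) = u := by omega
        rw [huu, Nat.mod_eq_of_lt (lt_of_lt_of_le (Nat.mod_lt _ hm) hmM), humod]
    calc (∑ i ∈ E, if l ∈ Tset M hM m (∑ x ∈ E.filter (· < i), f x) (f i) then 1 else 0)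
        = ∑ i ∈ E, (F.filter (fun u =>
            (∑ x ∈ E.filter (· < i), f x) ≤ u ∧ u < (∑ x ∈ E.filter (· < i), f x) + f i)).card :=
          Finset.sum_congr rfl (fun i hi => (hper i hi).symm)
      _ = F.card := hcards.symm
      _ = _ := hFcard

lemma card_filter_val_lt {M a : ℕ} (h : a ≤ M) :
    ((Finset.univ : Finset (Fin M)).filter (fun k : Fin M => (k : ℕ) < a)).card = a := by
  have he : (Finset.univ : Finset (Fin M)).filter (fun k : Fin M => (k:ℕ) < a)
      = (Finset.range a).attachFin (fun m hm => lt_of_lt_of_le (Finset.mem_range.mp hm) h) := by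
    ext k; simp [Finset.mem_attachFin]
  rw [he, Finset.card_attachFin, Finset.card_range]

abbrev Esupp {r n : ℕ} (H : Matrix (Fin r) (Fin n) (ZMod 2)) (j : Fin r) : Finset (Fin n) :=
  Finset.univ.filter (fun i => H j i = 1)

/-- a vector of nonnegative integers lying in the fundamental cone whose mod-2
reduction is a codeword is an unscaled pseudo-codeword. -/
theorem stmt4 {r n : ℕ} (H : Matrix (Fin r) (Fin n) (ZMod 2)) (p : Fin n → ℕ)
    (hcone : InFundCone H (fun i => (p i : ℝ)))
    (hcode : H.mulVec (fun i => (p i : ZMod 2)) = 0) :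
    IsUnscaledPseudoCodeword H p := by
  classical
  obtain ⟨-, hcone2⟩ := hcone
  have two01 : ∀ a : ZMod 2, a = 0 ∨ a = 1 := by decide
  set M := max 1 (∑ i, p i) with hMdef
  have hM : 0 < M := lt_of_lt_of_le one_pos (le_max_left 1 _)
  have hpM : ∀ i, p i ≤ M := fun i =>
    le_trans (Finset.single_le_sum (fun _ _ => Nat.zero_le _) (Finset.mem_univ i)) (le_max_right 1 _)
  have hSeven : ∀ j, 2 ∣ ∑ i ∈ Esupp H j, p i := by
    intro j
    have h0 := congrFun hcode j
    simp only [Matrix.mulVec, dotProduct, Pi.zero_apply] at h0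
    have hcast : ((∑ i ∈ Esupp H j, p i : ℕ) : ZMod 2) = 0 := by
      calc ((∑ i ∈ Esupp H j, p i : ℕ) : ZMod 2)
          = ∑ x : Fin n, H j x * ((p x : ℕ) : ZMod 2) := by
            rw [Nat.cast_sum, show Esupp H j = Finset.univ.filter (fun i => H j i = 1) from rfl,
              Finset.sum_filter]
            apply Finset.sum_congr rfl
            intro i _
            rcases two01 (H j i) with h | h <;> simp [h]
        _ = 0 := h0
    exact (ZMod.natCast_eq_zero_iff _ 2).mp hcast
  have hS2m : ∀ j, ∑ i ∈ Esupp H j, p i = 2 * ((∑ i ∈ Esupp H j, p i) / 2) := by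
    intro j; have := hSeven j; omega
  have hfm : ∀ j, ∀ i ∈ Esupp H j, p i ≤ (∑ i' ∈ Esupp H j, p i') / 2 := by
    intro j i hi
    have hij : H j i = 1 := (Finset.mem_filter.mp hi).2
    have h := hcone2 j i
    rw [hij] at h
    have hval1 : (((1 : ZMod 2)).val : ℝ) = 1 := by norm_num [show (1:ZMod 2).val = 1 from rfl]
    rw [hval1, one_mul] at h
    have hrhs : ∑ i' ∈ Finset.univ.erase i, ((H j i').val : ℝ) * ((p i' : ℕ) : ℝ)
        = ((∑ x ∈ (Esupp H j).erase i, p x : ℕ) : ℝ) := by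
      rw [Nat.cast_sum]
      have herase : (Esupp H j).erase i = (Finset.univ.erase i).filter (fun i' => H j i' = 1) := by
        ext x
        simp only [Finset.mem_erase, Finset.mem_filter, Finset.mem_univ, true_and]
        tauto
      rw [herase, Finset.sum_filter]
      apply Finset.sum_congr rfl
      intro i' _
      rcases two01 (H j i') with h' | h' <;>
        simp [h', show (0:ZMod 2).val = 0 from rfl, show (1:ZMod 2).val = 1 from rfl]
    rw [hrhs] at h
    have hle : p i ≤ ∑ x ∈ (Esupp H j).erase i, p x := by
      have h' : ((p i : ℕ) : ℝ) ≤ ((∑ x ∈ (Esupp H j).erase i, p x : ℕ) : ℝ) := h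
      exact_mod_cast h'
    have hsum := Finset.add_sum_erase (Esupp H j) p hi
    have h2 := hSeven j
    omega
  have hmM : ∀ j, (∑ i ∈ Esupp H j, p i) / 2 ≤ M := by
    intro j
    have h1 : ∑ i ∈ Esupp H j, p i ≤ ∑ i, p i :=
      Finset.sum_le_sum_of_subset (Finset.subset_univ _)
    have h2 : ∑ i, p i ≤ M := le_max_right 1 _
    omega
  have hσex : ∀ j i, ∃ σ : Equiv.Perm (Fin M), H j i = 1 →
      ∀ l : Fin M, ((σ l : ℕ) < p i ↔
        l ∈ Tset M hM ((∑ i' ∈ Esupp H j, p i') / 2)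
          (∑ x ∈ (Esupp H j).filter (· < i), p x) (p i)) := by
    intro j i
    by_cases hij : H j i = 1
    · have hiE : i ∈ Esupp H j := Finset.mem_filter.mpr ⟨Finset.mem_univ i, hij⟩
      have hcard : (Tset M hM ((∑ i' ∈ Esupp H j, p i') / 2)
            (∑ x ∈ (Esupp H j).filter (· < i), p x) (p i)).card
          = (Finset.univ.filter (fun k : Fin M => (k : ℕ) < p i)).card := by
        rw [Tset_card M hM _ _ _ (hmM j) (hfm j i hiE), card_filter_val_lt (hpM i)]
      have e : {x : Fin M // x ∈ Tset M hM ((∑ i' ∈ Esupp H j, p i') / 2)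
            (∑ x ∈ (Esupp H j).filter (· < i), p x) (p i)}
          ≃ {x : Fin M // x ∈ Finset.univ.filter (fun k : Fin M => (k : ℕ) < p i)} :=
        Finset.equivOfCardEq hcard
      refine ⟨e.extendSubtype, fun _ l => ?_⟩
      constructor
      · intro hlt
        by_contra hmem
        exact (Equiv.extendSubtype_not_mem e _ hmem)
          (Finset.mem_filter.mpr ⟨Finset.mem_univ _, hlt⟩)
      · intro hmem
        exact (Finset.mem_filter.mp (Equiv.extendSubtype_mem e _ hmem)).2
    · exact ⟨1, fun h => absurd h hij⟩
  choose σ hσ using hσex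
  refine ⟨M, hM, σ, fun ik => if (ik.2 : ℕ) < p ik.1 then 1 else 0, ?_, ?_⟩
  · funext jl
    obtain ⟨j, l⟩ := jl
    have step1 : (matLift H σ).mulVec (fun ik => if (ik.2 : ℕ) < p ik.1 then (1:ZMod 2) else 0) (j, l)
        = ∑ i : Fin n, (if H j i = 1 then (if ((σ j i l : ℕ) < p i) then (1:ZMod 2) else 0) else 0) := by
      simp only [Matrix.mulVec, dotProduct]
      rw [Fintype.sum_prod_type]
      apply Finset.sum_congr rfl
      intro i _
      by_cases hij : H j i = 1
      · rw [if_pos hij]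
        have hterm : ∀ k : Fin M, matLift H σ (j,l) (i,k) * (if ((k:ℕ) < p i) then (1:ZMod 2) else 0)
            = if σ j i l = k then (if ((k:ℕ) < p i) then (1:ZMod 2) else 0) else 0 := by
          intro k
          by_cases hk : σ j i l = k
          · simp [matLift, hij, hk]
          · simp [matLift, hij, hk]
        rw [Finset.sum_congr rfl (fun k _ => hterm k), Finset.sum_ite_eq]
        simp
      · rw [if_neg hij]
        apply Finset.sum_eq_zero
        intro k _
        simp [matLift, hij]
    rw [Pi.zero_apply, step1]
    have step2 : ∑ i : Fin n, (if H j i = 1 then (if ((σ j i l : ℕ) < p i) then (1:ZMod 2) else 0) else 0)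
        = ∑ i ∈ Esupp H j, (if l ∈ Tset M hM ((∑ i' ∈ Esupp H j, p i') / 2)
            (∑ x ∈ (Esupp H j).filter (· < i), p x) (p i) then (1:ZMod 2) else 0) := by
      rw [show Esupp H j = Finset.univ.filter (fun i => H j i = 1) from rfl, Finset.sum_filter]
      apply Finset.sum_congr rfl
      intro i _
      by_cases hij : H j i = 1
      · rw [if_pos hij, if_pos hij]
        simp only [hσ j i hij l]
      · rw [if_neg hij, if_neg hij]
    rw [step2]
    have step3 : ∑ i ∈ Esupp H j, (if l ∈ Tset M hM ((∑ i' ∈ Esupp H j, p i') / 2)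
            (∑ x ∈ (Esupp H j).filter (· < i), p x) (p i) then (1:ZMod 2) else 0)
        = ((∑ i ∈ Esupp H j, if l ∈ Tset M hM ((∑ i' ∈ Esupp H j, p i') / 2)
            (∑ x ∈ (Esupp H j).filter (· < i), p x) (p i) then 1 else 0 : ℕ) : ZMod 2) := by
      rw [Nat.cast_sum]
      apply Finset.sum_congr rfl
      intro i _
      split_ifs <;> simp
    rw [step3,
      Tcount p (Esupp H j) M ((∑ i' ∈ Esupp H j, p i') / 2) hM (hmM j) (hS2m j) (hfm j) l]
    split_ifs
    · exact (by decide : ((2:ℕ) : ZMod 2) = 0)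
    · simp
  · intro i
    have hfc : (Finset.univ.filter fun k : Fin M =>
          (fun ik : Fin n × Fin M => if (ik.2 : ℕ) < p ik.1 then (1:ZMod 2) else 0) (i, k) = 1)
        = Finset.univ.filter (fun k : Fin M => (k : ℕ) < p i) := by
      apply Finset.filter_congr
      intro k _
      by_cases h : (k : ℕ) < p i <;> simp [h]
    rw [hfc, card_filter_val_lt (hpM i)]
end

section
/- Suppose every column of H has even weight (so every bit node of the Tanner graph T(H) has even degree). Then a vector c ∈ F₂ⁿ satisfies Hcᵀ = 0 over F₂ if and only if there exists a finite family of pairwise edge-disjoint closed trails (closed walks with no repeated edge) in T(H) whose union of edge sets is exactly the set of edges of T(H) incident to some bit node x_i with c_i = 1; in particular, in this union, at each bit node x of T(H) either all or none of the edges incident to x occur. -/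
open Finset

open Finset

private lemma myCountP_eq {α : Type*} [DecidableEq α] (l : List α) (hl : l.Nodup)
    (p : α → Prop) [DecidablePred p] :
    l.countP (fun a => decide (p a)) = (l.toFinset.filter p).card := by
  rw [List.countP_eq_length_filter, ← List.toFinset_card_of_nodup (hl.filter _)]
  congr 1
  ext a
  simp

private lemma myEvenSum {ι : Type*} (s : Finset ι) (f : ι → ℕ) (h : ∀ i ∈ s, Even (f i)) :
    Even (∑ i ∈ s, f i) :=
  Finset.sum_induction f Even (fun _ _ => Even.add) Even.zero h

private lemma trail_decomp {V : Type*} [Fintype V] [DecidableEq V] (G : SimpleGraph V)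
    (S : Finset (Sym2 V)) (hS : ∀ e ∈ S, e ∈ G.edgeSet)
    (hdeg : ∀ x : V, Even ((S.filter (fun e => x ∈ e)).card)) :
    ∃ L : List ((x : V) × G.Walk x x),
      (∀ t ∈ L, t.2.IsTrail ∧ ¬ t.2.Nil) ∧
      L.Pairwise (fun t t' => ∀ e ∈ t.2.edges, e ∉ t'.2.edges) ∧
      (∀ e, (∃ t ∈ L, e ∈ t.2.edges) ↔ e ∈ S) := by
  classical
  induction S using Finset.strongInduction with
  | _ S ih =>
  rcases S.eq_empty_or_nonempty with rfl | ⟨e0, he0⟩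
  · exact ⟨[], by simp, by simp, by simp⟩
  · -- longest trail with edges in S
    set P : ℕ → Prop := fun m => ∃ (x : V) (y : V) (w : G.Walk x y),
      w.IsTrail ∧ (∀ e ∈ w.edges, e ∈ S) ∧ w.length = m with hP
    have hbound : ∀ m, P m → m ≤ S.card := by
      rintro m ⟨x, y, w, hwt, hwS, rfl⟩
      have h1 : w.edges.toFinset ⊆ S := fun e he => hwS e (List.mem_toFinset.mp he)
      calc w.length = w.edges.length := (SimpleGraph.Walk.length_edges w).symm
        _ = w.edges.toFinset.card := (List.toFinset_card_of_nodup hwt.edges_nodup).symm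
        _ ≤ S.card := Finset.card_le_card h1
    have hP1 : P 1 := by
      induction e0 using Sym2.ind with
      | _ a b =>
        have hab : G.Adj a b := (G.mem_edgeSet).mp (hS _ he0)
        refine ⟨a, b, SimpleGraph.Walk.cons hab SimpleGraph.Walk.nil, ?_, ?_, rfl⟩
        · simp [SimpleGraph.Walk.isTrail_def]
        · simpa using he0
    have hc1 : 1 ≤ S.card := Finset.card_pos.mpr ⟨e0, he0⟩
    set N := Nat.findGreatest P S.card with hNdef
    have hN : P N := Nat.findGreatest_spec hc1 hP1
    have hN1 : 1 ≤ N := Nat.le_findGreatest hc1 hP1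
    obtain ⟨x, y, w, hwt, hwS, hwl⟩ := hN
    have hxy : x = y := by
      by_contra hxy
      have hodd : ¬ Even (w.edges.countP fun e => y ∈ e) := by
        rw [hwt.even_countP_edges_iff]
        intro h
        exact (h hxy).2 rfl
      have hext : ∃ e ∈ S, y ∈ e ∧ e ∉ w.edges := by
        by_contra hno
        push_neg at hno
        have heq : S.filter (fun e => y ∈ e) = w.edges.toFinset.filter (fun e => y ∈ e) := by
          ext e
          simp only [Finset.mem_filter, List.mem_toFinset]
          exact ⟨fun ⟨h1, h2⟩ => ⟨hno e h1 h2, h2⟩, fun ⟨h1, h2⟩ => ⟨hwS e h1, h2⟩⟩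
        have := hdeg y
        rw [heq, ← myCountP_eq _ hwt.edges_nodup] at this
        exact hodd this
      obtain ⟨e, heS, hye, hew⟩ := hext
      obtain ⟨z, rfl⟩ := Sym2.mem_iff_exists.mp hye
      have hyz : G.Adj y z := (G.mem_edgeSet).mp (hS _ heS)
      have hP' : P (N + 1) := by
        refine ⟨x, z, w.concat hyz, ?_, ?_, by rw [SimpleGraph.Walk.length_concat, hwl]⟩
        · rw [SimpleGraph.Walk.isTrail_def, SimpleGraph.Walk.edges_concat,
            List.concat_eq_append]
          simpa [List.nodup_append] using ⟨hwt.edges_nodup, fun a ha h => hew (by subst h; exact ha)⟩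
        · intro e he
          rw [SimpleGraph.Walk.edges_concat, List.concat_eq_append, List.mem_append] at he
          rcases he with he | he
          · exact hwS e he
          · simp only [List.mem_singleton] at he
            exact he ▸ heS
      have := Nat.le_findGreatest (hbound _ hP') hP'
      omega
    subst hxy
    -- remove the closed trail's edges
    have hwne : w.edges.toFinset.Nonempty := by
      have : w.edges ≠ [] := by
        intro h
        have := SimpleGraph.Walk.length_edges w
        rw [h] at this
        simp at this
        omega
      rcases List.exists_mem_of_ne_nil _ this with ⟨e, he⟩
      exact ⟨e, List.mem_toFinset.mpr he⟩
    have hsubW : w.edges.toFinset ⊆ S := fun e he => hwS e (List.mem_toFinset.mp he)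
    set S' := S \ w.edges.toFinset with hS'def
    have hss : S' ⊂ S := Finset.sdiff_ssubset hsubW hwne
    have hS'E : ∀ e ∈ S', e ∈ G.edgeSet := fun e he => hS e (Finset.mem_sdiff.mp he).1
    have hweven : ∀ v : V, Even ((w.edges.toFinset.filter (fun e => v ∈ e)).card) := by
      intro v
      rw [← myCountP_eq _ hwt.edges_nodup]
      rw [hwt.even_countP_edges_iff]
      simp
    have hdeg' : ∀ v : V, Even ((S'.filter (fun e => v ∈ e)).card) := by
      intro v
      have hfe : S'.filter (fun e => v ∈ e)
          = S.filter (fun e => v ∈ e) \ w.edges.toFinset.filter (fun e => v ∈ e) := by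
        ext e
        simp only [Finset.mem_filter, Finset.mem_sdiff, hS'def]
        tauto
      have hsub2 : w.edges.toFinset.filter (fun e => v ∈ e) ⊆ S.filter (fun e => v ∈ e) :=
        Finset.filter_subset_filter _ hsubW
      rw [hfe, Finset.card_sdiff_of_subset hsub2, Nat.even_sub (Finset.card_le_card hsub2)]
      constructor <;> intro <;> [exact hweven v; exact hdeg v]
    obtain ⟨L', hL'1, hL'2, hL'3⟩ := ih S' hss hS'E hdeg'
    refine ⟨⟨x, w⟩ :: L', ?_, ?_, ?_⟩
    · intro t ht
      rw [List.mem_cons] at ht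
      rcases ht with rfl | ht
      · exact ⟨hwt, by rw [SimpleGraph.Walk.nil_iff_length_eq, hwl]; omega⟩
      · exact hL'1 t ht
    · rw [List.pairwise_cons]
      refine ⟨?_, hL'2⟩
      intro t' ht' e he he'
      have : e ∈ S' := (hL'3 e).mp ⟨t', ht', he'⟩
      rw [Finset.mem_sdiff] at this
      exact this.2 (List.mem_toFinset.mpr he)
    · intro e
      simp only [List.mem_cons, exists_eq_or_imp]
      rw [hL'3 e]
      constructor
      · rintro (he | he)
        · exact hsubW (List.mem_toFinset.mpr he)
        · exact (Finset.mem_sdiff.mp he).1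
      · intro he
        by_cases hw : e ∈ w.edges
        · exact Or.inl hw
        · exact Or.inr (Finset.mem_sdiff.mpr ⟨he, fun h => hw (List.mem_toFinset.mp h)⟩)


/-- for a bit-even Tanner graph, `c` is a codeword iff there is a family of
pairwise edge-disjoint closed trails whose edges are exactly the edges of `T(H)` incident
to bit nodes `x_i` with `c_i = 1`. -/
theorem stmt11 {r n : ℕ} (H : Matrix (Fin r) (Fin n) (ZMod 2))
    (heven : ∀ i, Even (Finset.univ.filter (fun j : Fin r => H j i = 1)).card)
    (c : Fin n → ZMod 2) :
    H.mulVec c = 0 ↔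
      ∃ (p : ℕ) (v : Fin p → Fin n ⊕ Fin r)
        (W : ∀ q, (TannerGraph H).Walk (v q) (v q)),
        -- each `W q` is a closed trail (closed walk of positive length, no repeated edge)
        (∀ q, (W q).IsTrail ∧ ¬ (W q).Nil) ∧
        -- the trails are pairwise edge-disjoint
        (∀ q q', q ≠ q' → ∀ e, e ∈ (W q).edges → e ∉ (W q').edges) ∧
        -- the union of their edge sets consists exactly of the edges of `T(H)` incident
        -- to some bit node `x_i` with `c i = 1`
        (∀ e : Sym2 (Fin n ⊕ Fin r),
          (∃ q, e ∈ (W q).edges) ↔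
            e ∈ (TannerGraph H).edgeSet ∧ ∃ i : Fin n, Sum.inl i ∈ e ∧ c i = 1) := by
  classical
  set G := TannerGraph H with hG
  set S : Finset (Sym2 (Fin n ⊕ Fin r)) := Finset.univ.filter
    (fun e => e ∈ G.edgeSet ∧ ∃ i : Fin n, Sum.inl i ∈ e ∧ c i = 1) with hSdef
  have hadj : ∀ (i : Fin n) (j : Fin r), G.Adj (Sum.inl i) (Sum.inr j) ↔ H j i = 1 :=
    fun i j => Iff.rfl
  have hedge : ∀ (a b : Fin n ⊕ Fin r), G.Adj a b →
      ∃ i j, H j i = 1 ∧ (a = Sum.inl i ∧ b = Sum.inr j ∨ a = Sum.inr j ∧ b = Sum.inl i) := by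
    rintro (i | j) (i' | j') h
    · exact h.elim
    · exact ⟨i, j', h, Or.inl ⟨rfl, rfl⟩⟩
    · exact ⟨i', j, h, Or.inr ⟨rfl, rfl⟩⟩
    · exact h.elim
  have hinj : ∀ j : Fin r, Function.Injective
      (fun i : Fin n => s(Sum.inl i, (Sum.inr j : Fin n ⊕ Fin r))) := by
    intro j i i' h
    simp only [Sym2.eq_iff] at h
    rcases h with ⟨h1, _⟩ | ⟨h1, _⟩
    · exact Sum.inl.inj h1
    · exact (Sum.inl_ne_inr h1).elim
  have hinj' : ∀ i : Fin n, Function.Injective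
      (fun j : Fin r => s((Sum.inl i : Fin n ⊕ Fin r), Sum.inr j)) := by
    intro i j j' h
    simp only [Sym2.eq_iff] at h
    rcases h with ⟨_, h2⟩ | ⟨h1, _⟩
    · exact Sum.inr.inj h2
    · exact (Sum.inl_ne_inr h1).elim
  have hA : ∀ j : Fin r, S.filter (fun e => Sum.inr j ∈ e)
      = (Finset.univ.filter (fun i => H j i = 1 ∧ c i = 1)).image
          (fun i => s(Sum.inl i, Sum.inr j)) := by
    intro j
    ext e
    simp only [hSdef, Finset.mem_filter, Finset.mem_image, Finset.mem_univ, true_and]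
    constructor
    · rintro ⟨⟨hE, i, hi, hci⟩, hj⟩
      induction e using Sym2.ind with
      | _ a b =>
        have hab : G.Adj a b := G.mem_edgeSet.mp hE
        obtain ⟨i', j', hH, (⟨rfl, rfl⟩ | ⟨rfl, rfl⟩)⟩ := hedge a b hab
        · rw [Sym2.mem_iff] at hj hi
          rcases hj with hj | hj
          · exact (Sum.inl_ne_inr hj.symm).elim
          · rcases hi with hi | hi
            · cases Sum.inl.inj hi
              cases Sum.inr.inj hj
              exact ⟨i, ⟨hH, hci⟩, rfl⟩
            · exact (Sum.inl_ne_inr hi).elim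
        · rw [Sym2.mem_iff] at hj hi
          rcases hj with hj | hj
          · rcases hi with hi | hi
            · exact (Sum.inl_ne_inr hi).elim
            · cases Sum.inl.inj hi
              cases Sum.inr.inj hj
              exact ⟨i, ⟨hH, hci⟩, Sym2.eq_swap⟩
          · exact (Sum.inl_ne_inr hj.symm).elim
    · rintro ⟨i, ⟨hH, hci⟩, rfl⟩
      exact ⟨⟨G.mem_edgeSet.mpr ((hadj i j).mpr hH), i, by simp, hci⟩, by simp⟩
  have hcardA : ∀ j : Fin r, (S.filter (fun e => Sum.inr j ∈ e)).card
      = (Finset.univ.filter (fun i => H j i = 1 ∧ c i = 1)).card := by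
    intro j
    rw [hA j, Finset.card_image_of_injective _ (hinj j)]
  have hB : ∀ j : Fin r, (H.mulVec c j = 0 ↔
      Even (Finset.univ.filter (fun i => H j i = 1 ∧ c i = 1)).card) := by
    intro j
    have hmul : H.mulVec c j
        = ∑ i : Fin n, if H j i = 1 ∧ c i = 1 then (1 : ZMod 2) else 0 := by
      unfold Matrix.mulVec dotProduct
      refine Finset.sum_congr rfl fun i _ => ?_
      have : ∀ a b : ZMod 2, a * b = if a = 1 ∧ b = 1 then 1 else 0 := by decide
      exact this _ _
    rw [hmul, Finset.sum_boole, ZMod.natCast_eq_zero_iff, ← even_iff_two_dvd]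
  have hBit : ∀ i : Fin n, Even ((S.filter (fun e => Sum.inl i ∈ e)).card) := by
    intro i
    by_cases hci : c i = 1
    · have heq : S.filter (fun e => Sum.inl i ∈ e)
          = (Finset.univ.filter (fun j => H j i = 1)).image
              (fun j => s(Sum.inl i, Sum.inr j)) := by
        ext e
        simp only [hSdef, Finset.mem_filter, Finset.mem_image, Finset.mem_univ, true_and]
        constructor
        · rintro ⟨⟨hE, i', hi', hci'⟩, hi⟩
          induction e using Sym2.ind with
          | _ a b =>
            have hab : G.Adj a b := G.mem_edgeSet.mp hE
            obtain ⟨i'', j', hH, (⟨rfl, rfl⟩ | ⟨rfl, rfl⟩)⟩ := hedge a b hab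
            · rw [Sym2.mem_iff] at hi
              rcases hi with hi | hi
              · cases Sum.inl.inj hi
                exact ⟨j', hH, rfl⟩
              · exact (Sum.inl_ne_inr hi).elim
            · rw [Sym2.mem_iff] at hi
              rcases hi with hi | hi
              · exact (Sum.inl_ne_inr hi).elim
              · cases Sum.inl.inj hi
                exact ⟨j', hH, Sym2.eq_swap⟩
        · rintro ⟨j, hH, rfl⟩
          exact ⟨⟨G.mem_edgeSet.mpr ((hadj i j).mpr hH), i, by simp, hci⟩, by simp⟩
      rw [heq, Finset.card_image_of_injective _ (hinj' i)]
      exact heven i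
    · have heq : S.filter (fun e => Sum.inl i ∈ e) = ∅ := by
        rw [Finset.eq_empty_iff_forall_notMem]
        intro e he
        rw [Finset.mem_filter, hSdef, Finset.mem_filter] at he
        obtain ⟨⟨_, hE, i', hi', hci'⟩, hi⟩ := he
        induction e using Sym2.ind with
        | _ a b =>
          have hab : G.Adj a b := G.mem_edgeSet.mp hE
          obtain ⟨i'', j', hH, (⟨rfl, rfl⟩ | ⟨rfl, rfl⟩)⟩ := hedge a b hab
          · rw [Sym2.mem_iff] at hi hi'
            rcases hi with hi | hi
            · rcases hi' with hi' | hi'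
              · cases Sum.inl.inj hi
                cases Sum.inl.inj hi'
                exact hci hci'
              · exact Sum.inl_ne_inr hi'
            · exact Sum.inl_ne_inr hi
          · rw [Sym2.mem_iff] at hi hi'
            rcases hi with hi | hi
            · exact Sum.inl_ne_inr hi
            · rcases hi' with hi' | hi'
              · exact Sum.inl_ne_inr hi'
              · cases Sum.inl.inj hi
                cases Sum.inl.inj hi'
                exact hci hci'
      rw [heq]
      simp
  constructor
  · intro h0
    have hSE : ∀ e ∈ S, e ∈ G.edgeSet := by
      intro e he
      rw [hSdef, Finset.mem_filter] at he
      exact he.2.1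
    have hdeg : ∀ x : Fin n ⊕ Fin r, Even ((S.filter (fun e => x ∈ e)).card) := by
      rintro (i | j)
      · exact hBit i
      · rw [hcardA j]
        exact (hB j).mp (congrFun h0 j)
    obtain ⟨L, h1, h2, h3⟩ := trail_decomp G S hSE hdeg
    refine ⟨L.length, fun q => (L.get q).1, fun q => (L.get q).2, ?_, ?_, ?_⟩
    · exact fun q => h1 _ (List.get_mem L q)
    · intro q q' hqq e he he'
      rcases lt_trichotomy q q' with hlt | heq | hlt
      · exact (List.pairwise_iff_get.mp h2 q q' hlt) e he he'
      · exact hqq heq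
      · exact (List.pairwise_iff_get.mp h2 q' q hlt) e he' he
    · intro e
      have : (∃ q, e ∈ (L.get q).2.edges) ↔ ∃ t ∈ L, e ∈ t.2.edges := by
        constructor
        · rintro ⟨q, h⟩
          exact ⟨L.get q, List.get_mem L q, h⟩
        · rintro ⟨t, ht, h⟩
          obtain ⟨q, rfl⟩ := List.mem_iff_get.mp ht
          exact ⟨q, h⟩
      rw [this, h3 e, hSdef, Finset.mem_filter]
      simp
  · rintro ⟨p, v, W, htr, hdisj, huni⟩
    funext j
    rw [Pi.zero_apply]
    rw [hB j, ← hcardA j]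
    have hTS : S.filter (fun e => Sum.inr j ∈ e)
        = Finset.univ.biUnion
            (fun q : Fin p => (W q).edges.toFinset.filter (fun e => Sum.inr j ∈ e)) := by
      ext e
      simp only [Finset.mem_biUnion, Finset.mem_univ, true_and, Finset.mem_filter,
        List.mem_toFinset, hSdef]
      constructor
      · rintro ⟨⟨hE, hi⟩, hj⟩
        obtain ⟨q, hq⟩ := (huni e).mpr ⟨hE, hi⟩
        exact ⟨q, hq, hj⟩
      · rintro ⟨q, hq, hj⟩
        obtain ⟨hE, hi⟩ := (huni e).mp ⟨q, hq⟩
        exact ⟨⟨hE, hi⟩, hj⟩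
    rw [hTS, Finset.card_biUnion]
    · apply myEvenSum
      intro q _
      rw [← myCountP_eq _ (htr q).1.edges_nodup]
      rw [(htr q).1.even_countP_edges_iff]
      simp
    · intro q _ q' _ hqq
      rw [Function.onFun, Finset.disjoint_left]
      intro e he he'
      rw [Finset.mem_filter, List.mem_toFinset] at he he'
      exact hdisj q q' hqq e he.1 he'.1
end
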